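/- For multirelations, the antidomain turns union into product and parallel composition into union: a(R ∪ S) = a(R) · a(S) and a(R‖S) = a(R) ∪ a(S). -/
import Mathlib


open Set

/-- Sequential composition of multirelations (Peleg). -/
def mseq {X : Type*} (R S : Set (X × Set X)) : Set (X × Set X) :=
  {p | ∃ B, (p.1, B) ∈ R ∧ ∃ f : X → Set X, (∀ b ∈ B, (b, f b) ∈ S) ∧ p.2 = ⋃ b ∈ B, f b}

/-- The unit of sequential composition. -/
def sunit (X : Type*) : Set (X × Set X) := {p | p.2 = {p.1}}

/-- Parallel (concurrent) composition of multirelations. -/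
def mpar {X : Type*} (R S : Set (X × Set X)) : Set (X × Set X) :=
  {p | ∃ A B, (p.1, A) ∈ R ∧ (p.1, B) ∈ S ∧ p.2 = A ∪ B}

/-- The unit of parallel composition. -/
def punit (X : Type*) : Set (X × Set X) := {p | p.2 = (∅ : Set X)}

/-- Domain of a multirelation. -/
def mdom {X : Type*} (R : Set (X × Set X)) : Set (X × Set X) :=
  {p | p.2 = {p.1} ∧ ∃ A, (p.1, A) ∈ R}

/-- Antidomain of a multirelation. -/
def mantidom {X : Type*} (R : Set (X × Set X)) : Set (X × Set X) :=
  {p | p.2 = {p.1} ∧ ¬ ∃ A, (p.1, A) ∈ R}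

/-- Diamond operator. -/
def mdia {X : Type*} (R P : Set (X × Set X)) : Set (X × Set X) := mdom (mseq R P)

theorem stmt15 {X : Type*} (R S : Set (X × Set X)) :
    mantidom (R ∪ S) = mseq (mantidom R) (mantidom S) ∧
    mantidom (mpar R S) = mantidom R ∪ mantidom S := by
  constructor
  · ext ⟨a, A⟩
    constructor
    · rintro ⟨hA, hn⟩
      refine ⟨{a}, ⟨hA.symm ▸ rfl, fun ⟨B, hB⟩ => hn ⟨B, Or.inl hB⟩⟩, fun _ => {a},
        fun b hb => ?_, ?_⟩
      · rcases hb with rfl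
        exact ⟨rfl, fun ⟨B, hB⟩ => hn ⟨B, Or.inr hB⟩⟩
      · simpa using hA
    · rintro ⟨B, ⟨hB, hnR⟩, f, hf, hA⟩
      simp only at hB
      subst hB
      obtain ⟨hfa, hnS⟩ := hf a rfl
      constructor
      · simp only at hA hfa ⊢
        simp [hA, hfa]
      · rintro ⟨C, hC | hC⟩
        · exact hnR ⟨C, hC⟩
        · exact hnS ⟨C, hC⟩
  · ext ⟨a, A⟩
    simp only [mantidom, mpar, Set.mem_setOf_eq, Set.mem_union, not_exists]
    constructor
    · rintro ⟨hA, hn⟩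
      by_cases hR : ∃ B, (a, B) ∈ R
      · obtain ⟨B, hB⟩ := hR
        right
        exact ⟨hA, fun C hC => hn (B ∪ C) B C ⟨hB, hC, rfl⟩⟩
      · push_neg at hR
        exact Or.inl ⟨hA, fun C hC => hR C hC⟩
    · rintro (⟨hA, hn⟩ | ⟨hA, hn⟩)
      · exact ⟨hA, fun C B D h => hn B h.1⟩
      · exact ⟨hA, fun C B D h => hn D h.2.1⟩
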